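/- There exists a strictly increasing C² solution x: ℝ → ℝ of the equation x″ = x(x−1)(x−1/2) such that 0 < x(t) < 1 for all t ∈ ℝ, (x(t), x′(t)) → (0,0) as t → −∞ and (x(t), x′(t)) → (1,0) as t → +∞ (a heteroclinic orbit connecting the equilibria (0,0) and (1,0) of the system x′ = y, y′ = x(x−1)(x−1/2)). -/

import Mathlib

open Filter Set

noncomputable section

/-- `x` is a (C²) solution of the autonomous equation `x'' = x(x-1)(x-a)`,
with derivative `dx`. -/
def IsAutSol (a : ℝ) (x dx : ℝ → ℝ) : Prop :=
  (∀ t : ℝ, HasDerivAt x (dx t) t) ∧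
  (∀ t : ℝ, HasDerivAt dx (x t * (x t - 1) * (x t - a)) t)

/-- the wave speed parameter -/
def nagK : ℝ := (Real.sqrt 2)⁻¹

lemma nagK_pos : 0 < nagK := inv_pos.mpr (Real.sqrt_pos.mpr (by norm_num))

lemma nagK_sq : nagK * nagK = 1 / 2 := by
  have : Real.sqrt 2 * Real.sqrt 2 = 2 := Real.mul_self_sqrt (by norm_num)
  have h2 : Real.sqrt 2 ≠ 0 := by positivity
  rw [nagK, ← mul_inv]
  rw [this]
  norm_num

/-- the explicit front -/
def nagX (t : ℝ) : ℝ := (1 + Real.exp (-(nagK * t)))⁻¹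

def nagDX (t : ℝ) : ℝ := nagK * (nagX t * (1 - nagX t))

lemma nagDen_pos (t : ℝ) : 0 < 1 + Real.exp (-(nagK * t)) := by positivity

lemma nagX_pos (t : ℝ) : 0 < nagX t := inv_pos.mpr (nagDen_pos t)

lemma nagX_lt_one (t : ℝ) : nagX t < 1 := by
  rw [nagX, inv_lt_one_iff₀]
  right
  have := Real.exp_pos (-(nagK * t))
  linarith

lemma one_sub_nagX (t : ℝ) :
    1 - nagX t = Real.exp (-(nagK * t)) * (1 + Real.exp (-(nagK * t)))⁻¹ := by
  have h := (nagDen_pos t).ne'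
  rw [nagX]
  field_simp
  ring

lemma hasDerivAt_nagX (t : ℝ) : HasDerivAt nagX (nagDX t) t := by
  have h1 : HasDerivAt (fun t : ℝ => -(nagK * t)) (-nagK) t := by
    exact (((hasDerivAt_id' t).const_mul nagK).neg).congr_deriv (by ring)
  have h2 : HasDerivAt (fun t : ℝ => Real.exp (-(nagK * t)))
      (Real.exp (-(nagK * t)) * (-nagK)) t := h1.exp
  have h3 : HasDerivAt (fun t : ℝ => 1 + Real.exp (-(nagK * t)))
      (Real.exp (-(nagK * t)) * (-nagK)) t := by exact ((hasDerivAt_const t 1).add h2).congr_deriv (by ring)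
  have h4 := h3.inv (nagDen_pos t).ne'
  convert h4 using 1
  · rfl
  · rfl
  · rfl
  rw [nagDX, one_sub_nagX, nagX]
  have h := (nagDen_pos t).ne'
  field_simp

lemma hasDerivAt_nagDX (t : ℝ) :
    HasDerivAt nagDX (nagX t * (nagX t - 1) * (nagX t - 1 / 2)) t := by
  have hx := hasDerivAt_nagX t
  have h : HasDerivAt (fun s => nagK * (nagX s * (1 - nagX s)))
      (nagK * (nagDX t * (1 - nagX t) + nagX t * (-nagDX t))) t := by
    simpa using ((hx.mul ((hasDerivAt_const t 1).sub hx))).const_mul nagK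
  convert h using 1
  · rfl
  rw [nagDX]
  have hk := nagK_sq
  linear_combination (-1 * nagX t * (1 - nagX t) * (1 - 2 * nagX t)) * hk

lemma nagDX_pos (t : ℝ) : 0 < nagDX t := by
  have h1 := nagX_pos t
  have h2 := nagX_lt_one t
  have := nagK_pos
  rw [nagDX]
  exact mul_pos nagK_pos (mul_pos h1 (by linarith))

theorem stmt_15 :
    ∃ x dx : ℝ → ℝ, IsAutSol (1 / 2) x dx ∧
      StrictMono x ∧
      (∀ t : ℝ, 0 < x t ∧ x t < 1) ∧
      Tendsto (fun t => (x t, dx t)) atBot (nhds ((0:ℝ), (0:ℝ))) ∧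
      Tendsto (fun t => (x t, dx t)) atTop (nhds ((1:ℝ), (0:ℝ))) := by
  refine ⟨nagX, nagDX, ⟨hasDerivAt_nagX, hasDerivAt_nagDX⟩, ?_, fun t => ⟨nagX_pos t, nagX_lt_one t⟩, ?_, ?_⟩
  · apply strictMono_of_deriv_pos
    intro t
    rw [(hasDerivAt_nagX t).deriv]
    exact nagDX_pos t
  · -- atBot
    have harg : Tendsto (fun t : ℝ => -(nagK * t)) atBot atTop := by
      have : Tendsto (fun t : ℝ => nagK * t) atBot atBot :=
        (tendsto_id.const_mul_atBot nagK_pos)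
      exact tendsto_neg_atBot_atTop.comp this
    have hexp : Tendsto (fun t : ℝ => Real.exp (-(nagK * t))) atBot atTop :=
      Real.tendsto_exp_atTop.comp harg
    have hden : Tendsto (fun t : ℝ => 1 + Real.exp (-(nagK * t))) atBot atTop :=
      tendsto_atTop_add_const_left _ 1 hexp
    have hX : Tendsto nagX atBot (nhds 0) := hden.inv_tendsto_atTop
    have hDX : Tendsto nagDX atBot (nhds 0) := by
      have : Tendsto (fun t => nagK * (nagX t * (1 - nagX t))) atBot
          (nhds (nagK * (0 * (1 - 0)))) :=
        tendsto_const_nhds.mul (hX.mul (tendsto_const_nhds.sub hX))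
      simp only [zero_mul, mul_zero, sub_self, sub_zero, one_mul, mul_one] at this
      exact this
    exact hX.prodMk_nhds hDX
  · -- atTop
    have harg : Tendsto (fun t : ℝ => -(nagK * t)) atTop atBot := by
      have : Tendsto (fun t : ℝ => nagK * t) atTop atTop :=
        (tendsto_id.const_mul_atTop nagK_pos)
      exact tendsto_neg_atTop_atBot.comp this
    have hexp : Tendsto (fun t : ℝ => Real.exp (-(nagK * t))) atTop (nhds 0) :=
      Real.tendsto_exp_atBot.comp harg
    have hden : Tendsto (fun t : ℝ => 1 + Real.exp (-(nagK * t))) atTop (nhds 1) := by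
      have h0 : Tendsto (fun t : ℝ => (1:ℝ) + Real.exp (-(nagK * t))) atTop (nhds (1 + 0)) :=
        tendsto_const_nhds.add hexp
      simpa using h0
    have hX : Tendsto nagX atTop (nhds 1) := by
      have := hden.inv₀ (by norm_num)
      simp only [inv_one] at this
      exact this
    have hDX : Tendsto nagDX atTop (nhds 0) := by
      have : Tendsto (fun t => nagK * (nagX t * (1 - nagX t))) atTop
          (nhds (nagK * (1 * (1 - 1)))) :=
        tendsto_const_nhds.mul (hX.mul (tendsto_const_nhds.sub hX))
      simp only [zero_mul, mul_zero, sub_self, sub_zero, one_mul, mul_one] at this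
      exact this
    exact hX.prodMk_nhds hDX
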